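/- Let η > 0. Then ∫_ℝ tanh(x)·N(x; η, η) dx = ∫_ℝ tanh²(x)·N(x; η, η) dx, where N(x; μ, v) = (1/√(2πv))·exp(−(x−μ)²/(2v)) is the real Gaussian density. -/

import Mathlib

set_option maxHeartbeats 800000

/-- The real Gaussian density with mean `μ` and variance `v`. -/
noncomputable def gaussPdf (μ v x : ℝ) : ℝ :=
  (Real.sqrt (2 * Real.pi * v))⁻¹ * Real.exp (-(x - μ) ^ 2 / (2 * v))

open MeasureTheory

lemma abs_tanh_le_one' (x : ℝ) : |Real.tanh x| ≤ 1 := by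
  have hs := Real.sinh_eq x
  have hc := Real.cosh_eq x
  have h1 := Real.exp_pos x
  have h2 := Real.exp_pos (-x)
  have hcp := Real.cosh_pos (x := x)
  rw [Real.tanh_eq_sinh_div_cosh, abs_div, abs_of_pos hcp, div_le_one hcp, abs_le]
  constructor <;> nlinarith

lemma tanh_key (x : ℝ) : Real.tanh x * (1 + Real.exp (-(2 * x))) = 1 - Real.exp (-(2 * x)) := by
  have h1 := Real.exp_pos x
  have he : Real.exp (-(2 * x)) = Real.exp (-x) * Real.exp (-x) := by
    rw [← Real.exp_add]; ring_nf
  have hne : Real.exp x ≠ 0 := ne_of_gt h1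
  rw [Real.tanh_eq_sinh_div_cosh, Real.sinh_eq, Real.cosh_eq, he, Real.exp_neg]
  have hcp : Real.exp x + (Real.exp x)⁻¹ ≠ 0 := by positivity
  field_simp

lemma gauss_neg (η : ℝ) (hη : 0 < η) (x : ℝ) :
    gaussPdf η η (-x) = Real.exp (-(2 * x)) * gaussPdf η η x := by
  unfold gaussPdf
  rw [mul_left_comm, ← Real.exp_add]
  congr 2
  field_simp
  ring

/-- Gaussian–tanh moment identity:
`∫ tanh(x)·N(x; η, η) dx = ∫ tanh²(x)·N(x; η, η) dx`. -/
theorem tanh_gauss_moment_identity (η : ℝ) (hη : 0 < η) :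
    ∫ x : ℝ, Real.tanh x * gaussPdf η η x
      = ∫ x : ℝ, Real.tanh x ^ 2 * gaussPdf η η x := by
  have hNint : Integrable (gaussPdf η η) := by
    have h : Integrable (fun x : ℝ => Real.exp (-(2 * η)⁻¹ * x ^ 2)) :=
      integrable_exp_neg_mul_sq (by positivity)
    have heq : gaussPdf η η = fun x : ℝ =>
        (Real.sqrt (2 * Real.pi * η))⁻¹ * Real.exp (-(2 * η)⁻¹ * (x - η) ^ 2) := by
      funext x
      unfold gaussPdf
      congr 2
      field_simp
    rw [heq]
    exact (h.comp_sub_right η).const_mul _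
  have hcont : Continuous Real.tanh := by
    have ht : Real.tanh = fun x => Real.sinh x / Real.cosh x :=
      funext fun x => Real.tanh_eq_sinh_div_cosh x
    rw [ht]
    exact Real.continuous_sinh.div Real.continuous_cosh fun x => (Real.cosh_pos x).ne'
  have hmeas : AEStronglyMeasurable (fun x : ℝ => Real.tanh x) volume :=
    hcont.aestronglyMeasurable
  have hf1 : Integrable (fun x : ℝ => Real.tanh x * gaussPdf η η x) := by
    refine hNint.bdd_mul (c := 1) hmeas (Filter.Eventually.of_forall fun x => ?_)
    rw [Real.norm_eq_abs]; exact abs_tanh_le_one' x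
  have hf2 : Integrable (fun x : ℝ => Real.tanh x ^ 2 * gaussPdf η η x) := by
    refine hNint.bdd_mul (c := 1) (hmeas.pow 2) (Filter.Eventually.of_forall fun x => ?_)
    rw [Real.norm_eq_abs, abs_pow]
    exact pow_le_one₀ (abs_nonneg _) (abs_tanh_le_one' x)
  have hf1n : Integrable (fun x : ℝ => Real.tanh (-x) * gaussPdf η η (-x)) :=
    hf1.comp_neg
  have hf2n : Integrable (fun x : ℝ => Real.tanh (-x) ^ 2 * gaussPdf η η (-x)) :=
    hf2.comp_neg
  have key : ∀ x : ℝ,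
      Real.tanh x * gaussPdf η η x + Real.tanh (-x) * gaussPdf η η (-x)
        = Real.tanh x ^ 2 * gaussPdf η η x + Real.tanh (-x) ^ 2 * gaussPdf η η (-x) := by
    intro x
    rw [gauss_neg η hη, Real.tanh_neg]
    have h := tanh_key x
    linear_combination (-(Real.tanh x * gaussPdf η η x)) * h
  have e1 : ∫ x : ℝ, Real.tanh (-x) * gaussPdf η η (-x)
      = ∫ x : ℝ, Real.tanh x * gaussPdf η η x :=
    integral_neg_eq_self (fun x => Real.tanh x * gaussPdf η η x) volume
  have e2 : ∫ x : ℝ, Real.tanh (-x) ^ 2 * gaussPdf η η (-x)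
      = ∫ x : ℝ, Real.tanh x ^ 2 * gaussPdf η η x :=
    integral_neg_eq_self (fun x => Real.tanh x ^ 2 * gaussPdf η η x) volume
  have big : ∫ x : ℝ, (Real.tanh x * gaussPdf η η x + Real.tanh (-x) * gaussPdf η η (-x))
      = ∫ x : ℝ, (Real.tanh x ^ 2 * gaussPdf η η x + Real.tanh (-x) ^ 2 * gaussPdf η η (-x)) := by
    exact integral_congr_ae (Filter.Eventually.of_forall key)
  rw [integral_add hf1 hf1n, integral_add hf2 hf2n, e1, e2] at big
  linarith
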